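/- Fix c1 > 0 and d ≥ 1, and let a(x) = exp(−c1|x|) for x ∈ ℝ^d. Set δ = c1 and b(x) = (1+|x|)^{d+δ} a(x). Then there exist constants c > 0 and ε = 1/4 such that for all n ≥ 1 and all x ∈ ℝ^d, the n-fold lattice convolution (b*b*…*b)(x) = Σ_{x_1,…,x_{n−1} ∈ ℤ^d} b(x−x_1) b(x_1−x_2) ⋯ b(x_{n−1}) satisfies (b^{*n})(x) ≤ c^n · b(εx). -/

import Mathlib

/-- `b(x) = (1+|x|)^{d+c1} e^{−c1|x|}` (the function `b` built from
`a(x) = e^{−c1|x|}` with `δ = c1`). -/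
noncomputable def bfun (d : ℕ) (c1 : ℝ) (x : EuclideanSpace ℝ (Fin d)) : ℝ :=
  (1 + ‖x‖) ^ ((d : ℝ) + c1) * Real.exp (-c1 * ‖x‖)

/-- Embedding of the lattice `ℤ^d` into `ℝ^d`. -/
noncomputable def emb (d : ℕ) (y : Fin d → ℤ) : EuclideanSpace ℝ (Fin d) :=
  (WithLp.equiv 2 (Fin d → ℝ)).symm fun i => (y i : ℝ)

/-- `iterConv d b n` is the `(n+1)`-fold lattice convolution `b * b * ⋯ * b`. -/
noncomputable def iterConv (d : ℕ) (b : EuclideanSpace ℝ (Fin d) → ℝ) :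
    ℕ → EuclideanSpace ℝ (Fin d) → ℝ
  | 0 => b
  | n + 1 => fun x => ∑' y : Fin d → ℤ, iterConv d b n (x - emb d y) * b (emb d y)

lemma aux1 (p β : ℝ) (hp : 0 < p) (hβ : 0 < β) (t : ℝ) (ht : 0 ≤ t) :
    (1 + t) ^ p ≤ (max 1 β⁻¹) ^ p * Real.exp (β * t * p) := by
  have hM : (1:ℝ) ≤ max 1 β⁻¹ := le_max_left _ _
  have hMβ : (1:ℝ) ≤ max 1 β⁻¹ * β := by
    calc (1:ℝ) = β⁻¹ * β := by field_simp
    _ ≤ max 1 β⁻¹ * β := by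
        exact mul_le_mul_of_nonneg_right (le_max_right _ _) hβ.le
  have h1 : 1 + t ≤ max 1 β⁻¹ * Real.exp (β * t) := by
    have h2 : 1 + β * t ≤ Real.exp (β * t) := by
      have := Real.add_one_le_exp (β * t); linarith
    calc 1 + t ≤ max 1 β⁻¹ * (1 + β * t) := by nlinarith
    _ ≤ max 1 β⁻¹ * Real.exp (β * t) :=
        mul_le_mul_of_nonneg_left h2 (by linarith)
  calc (1 + t) ^ p ≤ (max 1 β⁻¹ * Real.exp (β * t)) ^ p :=
        Real.rpow_le_rpow (by linarith) h1 hp.le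
    _ = (max 1 β⁻¹) ^ p * Real.exp (β * t) ^ p :=
        Real.mul_rpow (by linarith) (Real.exp_pos _).le
    _ = (max 1 β⁻¹) ^ p * Real.exp (β * t * p) := by
        rw [← Real.exp_mul]

lemma aux2 (g : ℤ → ℝ) (hg : Summable g) (hg0 : ∀ k, 0 ≤ g k) (n : ℕ) :
    Summable fun y : Fin n → ℤ => ∏ i, g (y i) := by
  induction n with
  | zero => exact Summable.of_finite
  | succ m ih =>
    have h := hg.mul_of_nonneg ih hg0 (fun y => Finset.prod_nonneg fun i _ => hg0 _)
    rw [← (Fin.consEquiv (fun _ : Fin (m+1) => ℤ)).summable_iff]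
    apply h.congr
    rintro ⟨k, y⟩
    simp only [Function.comp_apply, Fin.consEquiv_apply, Fin.prod_univ_succ, Fin.cons_zero, Fin.cons_succ]

lemma aux3 (β : ℝ) (hβ : 0 < β) : Summable fun k : ℤ => Real.exp (-β * |(k : ℝ)|) := by
  have hgeo : Summable fun n : ℕ => Real.exp (-β) ^ n :=
    summable_geometric_of_lt_one (Real.exp_pos _).le
      (Real.exp_lt_one_iff.mpr (by linarith))
  have key : ∀ n : ℕ, Real.exp (-β * |((n : ℤ) : ℝ)|) = Real.exp (-β) ^ n := by
    intro n
    rw [← Real.exp_nat_mul]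
    congr 1
    push_cast
    rw [abs_of_nonneg (by positivity)]
    ring
  apply Summable.of_nat_of_neg
  · exact hgeo.congr fun n => (key n).symm
  · apply hgeo.congr fun n => ?_
    rw [← key n]
    congr 1
    push_cast
    rw [abs_neg]

lemma aux4 {d : ℕ} (x : EuclideanSpace ℝ (Fin d)) (i : Fin d) : |x i| ≤ ‖x‖ := by
  rw [EuclideanSpace.norm_eq]
  rw [← Real.sqrt_sq_eq_abs]
  apply Real.sqrt_le_sqrt
  calc x i ^ 2 = ‖x i‖ ^ 2 := by rw [Real.norm_eq_abs, sq_abs]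
  _ ≤ ∑ j, ‖x j‖ ^ 2 := Finset.single_le_sum (f := fun j => ‖x j‖ ^ 2) (fun j _ => by positivity) (Finset.mem_univ i)

lemma aux6 (d : ℕ) (hd : 1 ≤ d) (α : ℝ) (hα : 0 < α) :
    Summable fun y : Fin d → ℤ => Real.exp (-α * ‖emb d y‖) := by
  have hd' : (0:ℝ) < d := by exact_mod_cast hd
  set g : ℤ → ℝ := fun k => Real.exp (-(α / d) * |(k : ℝ)|) with hgdef
  have hgsum : Summable g := aux3 _ (by positivity)
  have hg0 : ∀ k, 0 ≤ g k := fun k => (Real.exp_pos _).le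
  refine Summable.of_nonneg_of_le (f := fun y : Fin d → ℤ => ∏ i, g (y i))
    (fun y => (Real.exp_pos _).le) (fun y => ?_) (aux2 g hgsum hg0 d)
  have hsum : ∑ i, |((y i : ℝ))| ≤ (d : ℝ) * ‖emb d y‖ := by
    calc ∑ i, |((y i : ℝ))| = ∑ i : Fin d, |emb d y i| := by
          apply Finset.sum_congr rfl
          intro i _
          congr 1
    _ ≤ ∑ _i : Fin d, ‖emb d y‖ := Finset.sum_le_sum fun i _ => aux4 _ i
    _ = (d : ℝ) * ‖emb d y‖ := by simp [mul_comm]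
  have hprod : (∏ i, g (y i)) = Real.exp (∑ i, -(α / d) * |((y i : ℝ))|) := by
    rw [Real.exp_sum]
  show Real.exp (-α * ‖emb d y‖) ≤ ∏ i, g (y i)
  rw [hprod]
  apply Real.exp_le_exp.mpr
  have : ∑ i, -(α / d) * |((y i : ℝ))| = -(α / d) * ∑ i, |((y i : ℝ))| := by
    rw [Finset.mul_sum]
  rw [this]
  rw [neg_mul, neg_mul, neg_le_neg_iff]
  calc α * ‖emb d y‖ = (α / d) * ((d:ℝ) * ‖emb d y‖) := by field_simp
  _ ≥ (α / d) * ∑ i, |((y i : ℝ))| := by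
      apply mul_le_mul_of_nonneg_left hsum (by positivity)

/-- with `a(x) = e^{−c1|x|}`, `δ = c1`, `b(x) = (1+|x|)^{d+δ} a(x)`
and `ε = 1/4`, there is `c > 0` such that for every `n ≥ 1` (here `n+1`-fold)
and every `x ∈ ℝ^d`, `(b^{*n})(x) ≤ c^n · b(εx)`. -/
theorem iterConv_bound (d : ℕ) (hd : 1 ≤ d) (c1 : ℝ) (hc1 : 0 < c1) :
    ∃ c : ℝ, 0 < c ∧ ∀ (n : ℕ) (x : EuclideanSpace ℝ (Fin d)),
      iterConv d (bfun d c1) n x ≤ c ^ (n + 1) * bfun d c1 ((1 / 4 : ℝ) • x) := by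
  set p : ℝ := (d : ℝ) + c1 with hpdef
  have hp : 0 < p := by positivity
  set β : ℝ := c1 / (2 * p) with hβdef
  have hβ : 0 < β := by positivity
  set K : ℝ := (max 1 β⁻¹) ^ p with hKdef
  have hK1 : 1 ≤ K := Real.one_le_rpow (le_max_left _ _) hp.le
  have hK0 : 0 < K := lt_of_lt_of_le one_pos hK1
  have hb0 : ∀ x : EuclideanSpace ℝ (Fin d), 0 ≤ bfun d c1 x := fun x =>
    mul_nonneg (Real.rpow_nonneg (by positivity) _) (Real.exp_pos _).le
  have hb_le : ∀ x : EuclideanSpace ℝ (Fin d),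
      bfun d c1 x ≤ K * Real.exp (-(c1/2) * ‖x‖) := by
    intro x
    have h1 := aux1 p β hp hβ ‖x‖ (norm_nonneg x)
    have hβp : β * ‖x‖ * p = (c1/2) * ‖x‖ := by
      rw [hβdef]; field_simp
    rw [hβp] at h1
    show (1 + ‖x‖) ^ p * Real.exp (-c1 * ‖x‖) ≤ _
    calc (1 + ‖x‖) ^ p * Real.exp (-c1 * ‖x‖)
        ≤ (K * Real.exp ((c1/2) * ‖x‖)) * Real.exp (-c1 * ‖x‖) :=
          mul_le_mul_of_nonneg_right h1 (Real.exp_pos _).le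
      _ = K * Real.exp (-(c1/2) * ‖x‖) := by
          rw [mul_assoc, ← Real.exp_add]; ring_nf
  have hBsum : Summable (fun y : Fin d → ℤ => Real.exp (-(c1/4) * ‖emb d y‖)) :=
    aux6 d hd (c1/4) (by positivity)
  set S : ℝ := ∑' y : Fin d → ℤ, Real.exp (-(c1/4) * ‖emb d y‖) with hSdef
  have hS1 : 1 ≤ S := by
    have h0 : emb d (0 : Fin d → ℤ) = 0 := by
      ext i; simp [emb]
    have hle := Summable.le_tsum hBsum 0 (fun j _ => (Real.exp_pos _).le)
    rw [h0, norm_zero, mul_zero, Real.exp_zero] at hle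
    exact hle
  have hS0 : 0 < S := lt_of_lt_of_le one_pos hS1
  refine ⟨K * S, by positivity, ?_⟩
  have key : ∀ n (x : EuclideanSpace ℝ (Fin d)),
      iterConv d (bfun d c1) n x ≤ (K*S)^(n+1) * Real.exp (-(c1/4) * ‖x‖) := by
    intro n
    induction n with
    | zero =>
      intro x
      show bfun d c1 x ≤ _
      calc bfun d c1 x ≤ K * Real.exp (-(c1/2) * ‖x‖) := hb_le x
        _ ≤ K * Real.exp (-(c1/4) * ‖x‖) := by
            apply mul_le_mul_of_nonneg_left _ hK0.le
            apply Real.exp_le_exp.mpr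
            nlinarith [norm_nonneg x]
        _ ≤ (K*S)^(0+1) * Real.exp (-(c1/4) * ‖x‖) := by
            rw [pow_one]
            apply mul_le_mul_of_nonneg_right _ (Real.exp_pos _).le
            nlinarith
    | succ n ih =>
      intro x
      show (∑' y : Fin d → ℤ, iterConv d (bfun d c1) n (x - emb d y) * bfun d c1 (emb d y)) ≤ _
      set C : ℝ := (K*S)^(n+1) with hCdef
      have hC : 0 < C := by positivity
      have hpt : ∀ y : Fin d → ℤ,
          iterConv d (bfun d c1) n (x - emb d y) * bfun d c1 (emb d y)
          ≤ (C * K * Real.exp (-(c1/4) * ‖x‖)) * Real.exp (-(c1/4) * ‖emb d y‖) := by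
        intro y
        have h3 : Real.exp (-(c1/4) * ‖x - emb d y‖) * Real.exp (-(c1/2) * ‖emb d y‖)
            ≤ Real.exp (-(c1/4) * ‖x‖) * Real.exp (-(c1/4) * ‖emb d y‖) := by
          rw [← Real.exp_add, ← Real.exp_add]
          apply Real.exp_le_exp.mpr
          have htri : ‖x‖ ≤ ‖x - emb d y‖ + ‖emb d y‖ := by
            have := norm_add_le (x - emb d y) (emb d y)
            simpa using this
          nlinarith [norm_nonneg (emb d y)]
        calc iterConv d (bfun d c1) n (x - emb d y) * bfun d c1 (emb d y)
            ≤ (C * Real.exp (-(c1/4) * ‖x - emb d y‖)) * bfun d c1 (emb d y) :=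
              mul_le_mul_of_nonneg_right (ih _) (hb0 _)
          _ ≤ (C * Real.exp (-(c1/4) * ‖x - emb d y‖)) * (K * Real.exp (-(c1/2) * ‖emb d y‖)) :=
              mul_le_mul_of_nonneg_left (hb_le _) (by positivity)
          _ = (C * K) * (Real.exp (-(c1/4) * ‖x - emb d y‖) * Real.exp (-(c1/2) * ‖emb d y‖)) := by
              ring
          _ ≤ (C * K) * (Real.exp (-(c1/4) * ‖x‖) * Real.exp (-(c1/4) * ‖emb d y‖)) :=
              mul_le_mul_of_nonneg_left h3 (by positivity)
          _ = (C * K * Real.exp (-(c1/4) * ‖x‖)) * Real.exp (-(c1/4) * ‖emb d y‖) := by ring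
      by_cases hsumm : Summable (fun y : Fin d → ℤ =>
          iterConv d (bfun d c1) n (x - emb d y) * bfun d c1 (emb d y))
      · calc (∑' y : Fin d → ℤ, iterConv d (bfun d c1) n (x - emb d y) * bfun d c1 (emb d y))
            ≤ ∑' y : Fin d → ℤ, (C * K * Real.exp (-(c1/4) * ‖x‖)) * Real.exp (-(c1/4) * ‖emb d y‖) :=
              Summable.tsum_le_tsum hpt hsumm (hBsum.mul_left _)
          _ = (C * K * Real.exp (-(c1/4) * ‖x‖)) * S := tsum_mul_left
          _ = (K*S)^(n+1+1) * Real.exp (-(c1/4) * ‖x‖) := by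
              rw [hCdef, pow_succ]; ring
      · rw [tsum_eq_zero_of_not_summable hsumm]
        positivity
  intro n x
  refine (key n x).trans ?_
  apply mul_le_mul_of_nonneg_left _ (by positivity)
  have hn : ‖(1/4 : ℝ) • x‖ = (1/4) * ‖x‖ := by
    rw [norm_smul]; norm_num
  show _ ≤ (1 + ‖(1/4 : ℝ) • x‖) ^ p * Real.exp (-c1 * ‖(1/4 : ℝ) • x‖)
  rw [hn]
  have hre : -(c1/4) * ‖x‖ = -c1 * ((1/4) * ‖x‖) := by ring
  rw [hre]
  nth_rewrite 1 [← one_mul (Real.exp (-c1 * ((1/4) * ‖x‖)))]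
  apply mul_le_mul_of_nonneg_right _ (Real.exp_pos _).le
  apply Real.one_le_rpow _ hp.le
  nlinarith [norm_nonneg x]
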